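/- For θ > 0 and λ ∈ (0,1), the generalized Poisson distribution sums to one: ∑_{n=0}^∞ θ(θ+λn)^{n-1}/n! · e^{-(θ+λn)} = 1. -/

import Mathlib

open Finset Topology Filter

set_option maxHeartbeats 1000000


/-- Finite difference identity: `∑ k, C(n,k)(-1)^(n-k)(x+kz)^m = if m=n then n! z^n else 0` for `m ≤ n`. -/
lemma gpd_diff (n : ℕ) : ∀ m ≤ n, ∀ x z : ℝ,
    ∑ k ∈ range (n+1), (n.choose k : ℝ) * (-1)^(n-k) * (x + k*z)^m
      = if m = n then (n.factorial : ℝ) * z^n else 0 := by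
  induction n with
  | zero =>
    intro m hm x z
    interval_cases m
    simp
  | succ n ih =>
    intro m hm x z
    have pascal : ∑ k ∈ range (n+2), ((n+1).choose k : ℝ) * (-1)^(n+1-k) * (x + k*z)^m
        = ∑ k ∈ range (n+1), (n.choose k : ℝ) * (-1)^(n-k) * ((x + (k+1)*z)^m - (x + k*z)^m) := by
      have h1 : ∑ k ∈ range (n+2), ((n+1).choose k : ℝ) * (-1)^(n+1-k) * (x + k*z)^m
          = ∑ k ∈ range (n+2), ((n.choose k : ℝ) + (n.choose (k-1) : ℝ) * (if k = 0 then 0 else 1)) * (-1)^(n+1-k) * (x + k*z)^m := by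
        apply Finset.sum_congr rfl
        intro k hk
        congr 2
        rcases k with _ | k
        · simp
        · push_cast [Nat.choose_succ_succ']
          simp
          ring
      rw [h1]
      have h2 : ∀ k ∈ range (n+2), ((n.choose k : ℝ) + (n.choose (k-1) : ℝ) * (if k = 0 then 0 else 1)) * (-1)^(n+1-k) * (x + k*z)^m
          = (n.choose k : ℝ) * (-1)^(n+1-k) * (x + k*z)^m + (n.choose (k-1) : ℝ) * (if k = 0 then 0 else 1) * (-1)^(n+1-k) * (x + k*z)^m := by
        intro k _; ring
      rw [Finset.sum_congr rfl h2, Finset.sum_add_distrib]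
      -- first piece: k ranges effectively over range (n+1) since choose n (n+1) = 0
      have h3 : ∑ k ∈ range (n+2), (n.choose k : ℝ) * (-1)^(n+1-k) * (x + k*z)^m
          = ∑ k ∈ range (n+1), (n.choose k : ℝ) * (-1)^(n-k) * (-(x + k*z)^m) := by
        rw [Finset.sum_range_succ]
        simp only [Nat.choose_succ_self, Nat.cast_zero, zero_mul, add_zero]
        apply Finset.sum_congr rfl
        intro k hk
        have hk' : k ≤ n := Nat.lt_succ_iff.mp (Finset.mem_range.mp hk)
        have : n + 1 - k = (n - k) + 1 := by omega
        rw [this, pow_succ]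
        ring
      have h4 : ∑ k ∈ range (n+2), (n.choose (k-1) : ℝ) * (if k = 0 then 0 else 1) * (-1)^(n+1-k) * (x + k*z)^m
          = ∑ k ∈ range (n+1), (n.choose k : ℝ) * (-1)^(n-k) * (x + (k+1)*z)^m := by
        rw [Finset.sum_range_succ']
        simp only [if_true, eq_self_iff_true, mul_zero, zero_mul, add_zero]
        apply Finset.sum_congr rfl
        intro k hk
        have : n + 1 - (k+1) = n - k := by omega
        rw [if_neg (Nat.succ_ne_zero k), this]
        push_cast
        ring
      rw [h3, h4]
      rw [← Finset.sum_add_distrib]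
      apply Finset.sum_congr rfl
      intro k _
      ring
    rw [pascal]
    -- expand (x+(k+1)z)^m - (x+kz)^m via add_pow
    have expand : ∀ k : ℕ, (x + (k+1)*z : ℝ)^m - (x + k*z)^m
        = ∑ i ∈ range m, (m.choose i : ℝ) * (x + k*z)^i * z^(m-i) := by
      intro k
      have : (x + (k+1)*z : ℝ) = (x + k*z) + z := by ring
      rw [this, add_pow]
      rw [Finset.sum_range_succ]
      simp only [Nat.choose_self, Nat.cast_one, Nat.sub_self, pow_zero, mul_one, one_mul]
      rw [add_sub_cancel_right]
      apply Finset.sum_congr rfl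
      intro i hi
      ring
    calc ∑ k ∈ range (n+1), (n.choose k : ℝ) * (-1)^(n-k) * ((x + (k+1)*z)^m - (x + k*z)^m)
        = ∑ k ∈ range (n+1), ∑ i ∈ range m, (m.choose i : ℝ) * z^(m-i) * ((n.choose k : ℝ) * (-1)^(n-k) * (x + k*z)^i) := by
          apply Finset.sum_congr rfl
          intro k _
          rw [expand k, Finset.mul_sum]
          apply Finset.sum_congr rfl
          intro i _
          ring
      _ = ∑ i ∈ range m, (m.choose i : ℝ) * z^(m-i) * (∑ k ∈ range (n+1), (n.choose k : ℝ) * (-1)^(n-k) * (x + k*z)^i) := by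
          rw [Finset.sum_comm]
          apply Finset.sum_congr rfl
          intro i _
          rw [Finset.mul_sum]
      _ = ∑ i ∈ range m, (m.choose i : ℝ) * z^(m-i) * (if i = n then (n.factorial : ℝ) * z^n else 0) := by
          apply Finset.sum_congr rfl
          intro i hi
          have him : i < m := Finset.mem_range.mp hi
          rw [ih i (by omega) x z]
      _ = if m = n + 1 then ((n+1).factorial : ℝ) * z^(n+1) else 0 := by
          rcases eq_or_ne m (n+1) with hm1 | hm1
          · subst hm1
            rw [if_pos rfl]
            rw [Finset.sum_eq_single n]
            · rw [if_pos rfl]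
              have : (n+1) - n = 1 := by omega
              rw [this, Nat.choose_succ_self_right]
              push_cast [Nat.factorial_succ]
              ring
            · intro i _ hin; rw [if_neg hin, mul_zero]
            · intro h; exact absurd (Finset.mem_range.mpr (by omega)) h
          · rw [if_neg hm1]
            apply Finset.sum_eq_zero
            intro i hi
            have : i < m := Finset.mem_range.mp hi
            rw [if_neg (by omega), mul_zero]


lemma gpd_D (z : ℝ) : ∀ n : ℕ, ∀ x y : ℝ,
    ∑ k ∈ range (n+1), (n.choose k : ℝ) * (x + k*z)^k * (y - k*z)^(n-k)
      = ∑ j ∈ range (n+1), (n.descFactorial j : ℝ) * z^j * (x + y)^(n-j) := by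
  intro n
  induction n with
  | zero => intro x y; simp
  | succ n ih =>
    intro x y
    set L : ℝ → ℝ := fun w => ∑ k ∈ range (n+1+1), ((n+1).choose k : ℝ) * (x + k*z)^k * (w - k*z)^(n+1-k) with hL
    set R : ℝ → ℝ := fun w => ∑ j ∈ range (n+1+1), ((n+1).descFactorial j : ℝ) * z^j * (x + w)^(n+1-j) with hR
    have hderiv : ∀ w : ℝ, HasDerivAt (fun v => L v - R v) 0 w := by
      intro w
      have hLd : HasDerivAt L
          (∑ k ∈ range (n+1+1), ((n+1).choose k : ℝ) * (x + k*z)^k * ((n+1-k : ℕ) * (w - k*z)^(n+1-k-1))) w := by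
        apply HasDerivAt.fun_sum
        intro k _
        have h1 : HasDerivAt (fun v : ℝ => (v - k*z)^(n+1-k))
            (((n+1-k : ℕ) : ℝ) * (w - k*z)^(n+1-k-1) * 1) w :=
          ((hasDerivAt_id w).sub_const (k*z)).pow (n+1-k)
        exact (h1.const_mul (((n+1).choose k : ℝ) * (x + k*z)^k)).congr_deriv (by ring)
      have hRd : HasDerivAt R
          (∑ j ∈ range (n+1+1), ((n+1).descFactorial j : ℝ) * z^j * ((n+1-j : ℕ) * (x + w)^(n+1-j-1))) w := by
        apply HasDerivAt.fun_sum
        intro j _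
        have h1 : HasDerivAt (fun v : ℝ => (x + v)^(n+1-j))
            (((n+1-j : ℕ) : ℝ) * (x + w)^(n+1-j-1) * 1) w :=
          ((hasDerivAt_id w).const_add x).pow (n+1-j)
        exact (h1.const_mul (((n+1).descFactorial j : ℝ) * z^j)).congr_deriv (by ring)
      -- identify the two derivative values
      have hLval : (∑ k ∈ range (n+1+1), ((n+1).choose k : ℝ) * (x + k*z)^k * ((n+1-k : ℕ) * (w - k*z)^(n+1-k-1)))
          = (n+1 : ℝ) * ∑ k ∈ range (n+1), (n.choose k : ℝ) * (x + k*z)^k * (w - k*z)^(n-k) := by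
        rw [Finset.sum_range_succ]
        simp only [Nat.sub_self, Nat.cast_zero, zero_mul, mul_zero, add_zero]
        rw [Finset.mul_sum]
        apply Finset.sum_congr rfl
        intro k hk
        have hk' : k ≤ n := Nat.lt_succ_iff.mp (Finset.mem_range.mp hk)
        have e1 : n + 1 - k - 1 = n - k := by omega
        have e2 : ((n+1-k : ℕ) : ℝ) * ((n+1).choose k : ℝ) = (n+1 : ℝ) * (n.choose k : ℝ) := by
          have h3 : (n+1).choose (k+1) * (k+1) = (n+1).choose k * (n+1-k) := Nat.choose_succ_right_eq (n+1) k
          have h4 : (n+1) * n.choose k = (n+1).choose (k+1) * (k+1) := Nat.add_one_mul_choose_eq n k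
          have h5 : (n+1-k) * (n+1).choose k = (n+1) * n.choose k := by
            calc (n+1-k) * (n+1).choose k = (n+1).choose k * (n+1-k) := mul_comm _ _
              _ = (n+1).choose (k+1) * (k+1) := h3.symm
              _ = (n+1) * n.choose k := h4.symm
          have h6 := congrArg (fun t : ℕ => (t:ℝ)) h5
          simp only [Nat.cast_mul] at h6
          rw [Nat.cast_sub (by omega : k ≤ n+1)] at h6
          rw [Nat.cast_sub (by omega : k ≤ n+1)]
          push_cast at h6 ⊢
          linarith
        rw [e1]
        calc ((n+1).choose k : ℝ) * (x + k*z)^k * ((n+1-k : ℕ) * (w - k*z)^(n-k))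
            = (((n+1-k : ℕ) : ℝ) * ((n+1).choose k : ℝ)) * ((x + k*z)^k * (w - k*z)^(n-k)) := by ring
          _ = ((n+1 : ℝ) * (n.choose k : ℝ)) * ((x + k*z)^k * (w - k*z)^(n-k)) := by rw [e2]
          _ = (n+1 : ℝ) * ((n.choose k : ℝ) * (x + k*z)^k * (w - k*z)^(n-k)) := by ring
      have hRval : (∑ j ∈ range (n+1+1), ((n+1).descFactorial j : ℝ) * z^j * ((n+1-j : ℕ) * (x + w)^(n+1-j-1)))
          = (n+1 : ℝ) * ∑ j ∈ range (n+1), (n.descFactorial j : ℝ) * z^j * (x + w)^(n-j) := by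
        rw [Finset.sum_range_succ]
        simp only [Nat.sub_self, Nat.cast_zero, zero_mul, mul_zero, add_zero]
        rw [Finset.mul_sum]
        apply Finset.sum_congr rfl
        intro j hj
        have hj' : j ≤ n := Nat.lt_succ_iff.mp (Finset.mem_range.mp hj)
        have e1 : n + 1 - j - 1 = n - j := by omega
        have e2 : ((n+1-j : ℕ) : ℝ) * ((n+1).descFactorial j : ℝ) = (n+1 : ℝ) * (n.descFactorial j : ℝ) := by
          have h3 : (n+1).descFactorial (j+1) = (n+1-j) * (n+1).descFactorial j := Nat.descFactorial_succ (n+1) j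
          have h4 : (n+1).descFactorial (j+1) = (n+1) * n.descFactorial j := Nat.succ_descFactorial_succ n j
          have h5 : (n+1-j) * (n+1).descFactorial j = (n+1) * n.descFactorial j := h3.symm.trans h4
          have h6 := congrArg (fun t : ℕ => (t:ℝ)) h5
          simp only [Nat.cast_mul] at h6
          rw [Nat.cast_sub (by omega : j ≤ n+1)] at h6
          rw [Nat.cast_sub (by omega : j ≤ n+1)]
          push_cast at h6 ⊢
          linarith
        rw [e1]
        calc ((n+1).descFactorial j : ℝ) * z^j * ((n+1-j : ℕ) * (x + w)^(n-j))
            = (((n+1-j : ℕ) : ℝ) * ((n+1).descFactorial j : ℝ)) * (z^j * (x + w)^(n-j)) := by ring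
          _ = ((n+1 : ℝ) * (n.descFactorial j : ℝ)) * (z^j * (x + w)^(n-j)) := by rw [e2]
          _ = (n+1 : ℝ) * ((n.descFactorial j : ℝ) * z^j * (x + w)^(n-j)) := by ring
      have : HasDerivAt (fun v => L v - R v)
          ((n+1 : ℝ) * ∑ k ∈ range (n+1), (n.choose k : ℝ) * (x + k*z)^k * (w - k*z)^(n-k)
            - (n+1 : ℝ) * ∑ j ∈ range (n+1), (n.descFactorial j : ℝ) * z^j * (x + w)^(n-j)) w := by
        exact (hLd.congr_deriv hLval).sub (hRd.congr_deriv hRval)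
      have hz : ((n+1 : ℝ) * ∑ k ∈ range (n+1), (n.choose k : ℝ) * (x + k*z)^k * (w - k*z)^(n-k)
            - (n+1 : ℝ) * ∑ j ∈ range (n+1), (n.descFactorial j : ℝ) * z^j * (x + w)^(n-j)) = 0 := by
        rw [ih x w]; ring
      exact hz ▸ this
    -- difference is constant; evaluate at y = -x
    have hconst : L y - R y = L (-x) - R (-x) :=
      is_const_of_deriv_eq_zero (fun w => (hderiv w).differentiableAt)
        (fun w => (hderiv w).deriv) y (-x)
    have hanchor : L (-x) - R (-x) = 0 := by
      have hLa : L (-x) = ((n+1).factorial : ℝ) * z^(n+1) := by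
        rw [hL]
        dsimp only
        have := gpd_diff (n+1) (n+1) le_rfl x z
        rw [if_pos rfl] at this
        rw [← this]
        apply Finset.sum_congr rfl
        intro k hk
        have hk' : k ≤ n + 1 := Nat.lt_succ_iff.mp (Finset.mem_range.mp hk)
        have h1 : (-x - k*z : ℝ) = (-1) * (x + k*z) := by ring
        rw [h1, mul_pow]
        have h2 : (x + k*z : ℝ)^k * (x + k*z)^(n+1-k) = (x + k*z)^(n+1) := by
          rw [← pow_add]; congr 1; omega
        calc ((n+1).choose k : ℝ) * (x + k*z)^k * ((-1)^(n+1-k) * (x + k*z)^(n+1-k))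
            = ((n+1).choose k : ℝ) * (-1)^(n+1-k) * ((x + k*z)^k * (x + k*z)^(n+1-k)) := by ring
          _ = ((n+1).choose k : ℝ) * (-1)^(n+1-k) * (x + k*z)^(n+1) := by rw [h2]
      have hRa : R (-x) = ((n+1).factorial : ℝ) * z^(n+1) := by
        rw [hR]
        dsimp only
        rw [Finset.sum_eq_single (n+1)]
        · have hx0 : (x + -x : ℝ) = 0 := by ring
          rw [hx0, Nat.sub_self, pow_zero, mul_one, Nat.descFactorial_self]
        · intro j hj hjne
          have : x + -x = (0:ℝ) := by ring
          rw [this]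
          have hj' : j < n + 2 := Finset.mem_range.mp hj
          have : (0:ℝ)^(n+1-j) = 0 := by
            apply zero_pow
            omega
          rw [this, mul_zero]
        · intro h; exact absurd (Finset.mem_range.mpr (by omega)) h
      rw [hLa, hRa, sub_self]
    have hLR := hconst.trans hanchor
    have : L y = R y := by linarith
    exact this


/-- Key finite identity: `∑_{n=1}^N C(N,n) x (x+nz)^{n-1} (-nz)^{N-n} = x^N` for `N = M+1 ≥ 1`. -/
lemma gpd_keyfin (M : ℕ) (x z : ℝ) :
    ∑ n ∈ range (M+1+1), (if n = 0 then 0 else ((M+1).choose n : ℝ) * x * (x + n*z)^(n-1) * (-(n*z))^(M+1-n))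
      = x^(M+1) := by
  have split : ∀ n ∈ range (M+1+1),
      (if n = 0 then 0 else ((M+1).choose n : ℝ) * x * (x + n*z)^(n-1) * (-(n*z))^(M+1-n))
      = ((M+1).choose n : ℝ) * (x + n*z)^n * ((0:ℝ) - n*z)^(M+1-n)
        - (if n = 0 then 0 else ((M+1).choose n : ℝ) * (n*z) * (x + n*z)^(n-1) * (-(n*z))^(M+1-n)) := by
    intro n hn
    rcases n with _ | m
    · simp only [if_pos rfl, Nat.cast_zero]
      have h0 : ((0:ℝ) - 0*z) = 0 := by ring
      rw [h0]
      have hN0 : (0:ℝ)^(M+1-0) = 0 := by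
        apply zero_pow; omega
      simp [hN0]
    · rw [if_neg (Nat.succ_ne_zero m), if_neg (Nat.succ_ne_zero m)]
      have hpow : (x + ((m+1:ℕ):ℝ)*z)^(m+1) = (x + ((m+1:ℕ):ℝ)*z) * (x + ((m+1:ℕ):ℝ)*z)^m := by
        rw [pow_succ]; ring
      have hm1 : (m + 1 : ℕ) - 1 = m := rfl
      rw [hm1, hpow]
      have h0 : ((0:ℝ) - ((m+1:ℕ):ℝ)*z) = -(((m+1:ℕ):ℝ)*z) := by ring
      rw [h0]
      ring
  rw [Finset.sum_congr rfl split, Finset.sum_sub_distrib]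
  have h1 : ∑ n ∈ range (M+1+1), ((M+1).choose n : ℝ) * (x + n*z)^n * ((0:ℝ) - n*z)^(M+1-n)
      = ∑ j ∈ range (M+1+1), ((M+1).descFactorial j : ℝ) * z^j * x^(M+1-j) := by
    have := gpd_D z (M+1) x 0
    simpa using this
  have h2 : ∑ n ∈ range (M+1+1), (if n = 0 then 0 else ((M+1).choose n : ℝ) * (n*z) * (x + n*z)^(n-1) * (-(n*z))^(M+1-n))
      = ((M:ℝ)+1) * z * ∑ j ∈ range (M+1), (M.descFactorial j : ℝ) * z^j * x^(M-j) := by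
    rw [Finset.sum_range_succ']
    have hz0 : (if (0:ℕ) = 0 then (0:ℝ) else ((M+1).choose 0 : ℝ) * (((0:ℕ):ℝ)*z) * (x + ((0:ℕ):ℝ)*z)^((0:ℕ)-1) * (-(((0:ℕ):ℝ)*z))^(M+1-0)) = 0 := if_pos rfl
    rw [hz0, add_zero]
    have hcongr : ∀ m ∈ range (M+1),
        (if m + 1 = 0 then (0:ℝ) else ((M+1).choose (m+1) : ℝ) * (((m+1:ℕ):ℝ)*z) * (x + ((m+1:ℕ):ℝ)*z)^(m+1-1) * (-(((m+1:ℕ):ℝ)*z))^(M+1-(m+1)))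
        = ((M:ℝ)+1) * z * ((M.choose m : ℝ) * ((x+z) + m*z)^m * ((-z) - m*z)^(M-m)) := by
      intro m hm
      rw [if_neg (Nat.succ_ne_zero m)]
      have hc : ((M+1).choose (m+1) : ℝ) * ((m:ℝ)+1) = ((M:ℝ)+1) * (M.choose m : ℝ) := by
        have h5 := Nat.add_one_mul_choose_eq M m
        have h6 := congrArg (fun t : ℕ => (t:ℝ)) h5
        push_cast at h6
        linarith
      have hm1 : (m + 1 : ℕ) - 1 = m := rfl
      have hNm : M + 1 - (m+1) = M - m := by omega
      rw [hm1, hNm]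
      push_cast
      have hx : (x + ((m:ℝ)+1)*z) = ((x+z) + m*z) := by ring
      have hy : (-(((m:ℝ)+1)*z)) = ((-z) - m*z) := by ring
      rw [hx, hy]
      calc ((M+1).choose (m+1) : ℝ) * (((m:ℝ)+1)*z) * ((x+z) + m*z)^m * ((-z) - m*z)^(M-m)
          = (((M+1).choose (m+1) : ℝ) * ((m:ℝ)+1)) * (z * (((x+z) + m*z)^m * ((-z) - m*z)^(M-m))) := by ring
        _ = (((M:ℝ)+1) * (M.choose m : ℝ)) * (z * (((x+z) + m*z)^m * ((-z) - m*z)^(M-m))) := by rw [hc]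
        _ = ((M:ℝ)+1) * z * ((M.choose m : ℝ) * ((x+z) + m*z)^m * ((-z) - m*z)^(M-m)) := by ring
    rw [Finset.sum_congr rfl hcongr, ← Finset.mul_sum]
    rw [gpd_D z M (x+z) (-z)]
    have hxz : (x + z + -z : ℝ) = x := by ring
    rw [hxz]
  rw [h1, h2]
  rw [Finset.sum_range_succ']
  simp only [Nat.descFactorial_zero, Nat.cast_one, one_mul, pow_zero, Nat.sub_zero]
  have hcongr2 : ∀ j ∈ range (M+1),
      (((M+1).descFactorial (j+1) : ℝ)) * z^(j+1) * x^(M+1-(j+1))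
      = ((M:ℝ)+1) * z * ((M.descFactorial j : ℝ) * z^j * x^(M-j)) := by
    intro j hj
    have h7 : (M+1).descFactorial (j+1) = (M+1) * M.descFactorial j := Nat.succ_descFactorial_succ M j
    have hNj : M + 1 - (j+1) = M - j := by omega
    rw [h7, hNj]
    push_cast
    ring
  rw [Finset.sum_congr rfl hcongr2, ← Finset.mul_sum]
  ring


/-- `n^n ≤ n! * e^n` -/
lemma gpd_pow_le_factorial_exp : ∀ n : ℕ, (n:ℝ)^n ≤ (n.factorial : ℝ) * Real.exp 1 ^ n := by
  intro n
  induction n with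
  | zero => simp
  | succ n ih =>
    have he : (0:ℝ) < Real.exp 1 := Real.exp_pos 1
    have h1 : ((n:ℝ)+1)^(n+1) = ((n:ℝ)+1) * ((n:ℝ)+1)^n := by rw [pow_succ]; ring
    have h2 : ((n:ℝ)+1)^n ≤ (n:ℝ)^n * Real.exp 1 := by
      rcases Nat.eq_zero_or_pos n with h | h
      · subst h; simp
      · have hn0 : (0:ℝ) < n := by exact_mod_cast h
        have : ((n:ℝ)+1)^n = (n:ℝ)^n * (1 + 1/n)^n := by
          rw [← mul_pow]
          congr 1
          field_simp
        rw [this]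
        have h3 : (1 + 1/(n:ℝ))^n ≤ Real.exp 1 := by
          have h4 : (1 + 1/(n:ℝ)) ≤ Real.exp (1/n) := by
            have := Real.add_one_le_exp (1/(n:ℝ))
            linarith
          have h5 : (1 + 1/(n:ℝ))^n ≤ (Real.exp (1/n))^n := by
            apply pow_le_pow_left₀ (by positivity) h4
          rwa [← Real.exp_nat_mul, mul_one_div, div_self (ne_of_gt hn0)] at h5
        have h6 : (0:ℝ) ≤ (n:ℝ)^n := by positivity
        nlinarith [pow_nonneg (le_of_lt hn0) n]
    calc ((n+1:ℕ):ℝ)^(n+1) = ((n:ℝ)+1) * ((n:ℝ)+1)^n := by push_cast; rw [h1]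
      _ ≤ ((n:ℝ)+1) * ((n:ℝ)^n * Real.exp 1) := by
          apply mul_le_mul_of_nonneg_left h2 (by positivity)
      _ ≤ ((n:ℝ)+1) * (((n.factorial : ℝ)) * Real.exp 1 ^ n * Real.exp 1) := by
          apply mul_le_mul_of_nonneg_left _ (by positivity)
          apply mul_le_mul_of_nonneg_right ih (le_of_lt he)
      _ = ((n+1).factorial : ℝ) * Real.exp 1 ^ (n+1) := by
          rw [Nat.factorial_succ]
          push_cast
          ring
/-- Basic geometric-type summability for GPD-like terms. -/
lemma gpd_summable_aux (θ ρ r : ℝ) (hθ : 0 < θ) (hρ : 0 ≤ ρ) (hr : 0 < r)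
    (h : ρ * r * Real.exp 1 < 1) :
    Summable (fun n : ℕ => θ * (θ + ρ*n)^(n-1) * r^n / n.factorial) := by
  set e := Real.exp 1 with hedef
  have he : (0:ℝ) < e := Real.exp_pos 1
  set q := (1 + ρ*r*e)/2 with hqdef
  have hq1 : q < 1 := by rw [hqdef]; linarith
  have hq0 : 0 ≤ q := by rw [hqdef]; positivity
  obtain ⟨n₀, hn₀⟩ := exists_nat_ge (2*θ*r*e/(1 - ρ*r*e))
  set N₀ := n₀ + 1 with hNdef
  have key : ∀ n : ℕ, N₀ ≤ n → θ * (θ + ρ*n)^(n-1) * r^n / n.factorial ≤ q^n := by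
    intro n hn
    have hn1 : 1 ≤ n := le_trans (by omega) hn
    have hnpos : (0:ℝ) < n := by exact_mod_cast lt_of_lt_of_le Nat.zero_lt_one hn1
    have hfac : (0:ℝ) < n.factorial := by exact_mod_cast n.factorial_pos
    have hbase : (0:ℝ) < θ + ρ*n := by positivity
    -- step 1: θ(θ+ρn)^{n-1} ≤ (θ+ρn)^n
    have s1 : θ * (θ + ρ*n)^(n-1) ≤ (θ + ρ*n)^n := by
      have hwn : (θ + ρ*n)^n = (θ + ρ*n)^(n-1) * (θ + ρ*n) := by
        rw [← pow_succ]
        congr 1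
        omega
      rw [hwn]
      have hpnn : (0:ℝ) ≤ (θ + ρ*n)^(n-1) := pow_nonneg (le_of_lt hbase) (n-1)
      nlinarith [mul_nonneg hpnn (mul_nonneg hρ (le_of_lt hnpos))]
    -- step 2: 1/n! ≤ e^n/n^n
    have s2 : (1:ℝ)/n.factorial ≤ e^n / (n:ℝ)^n := by
      rw [div_le_div_iff₀ hfac (by positivity)]
      calc (1:ℝ) * (n:ℝ)^n = (n:ℝ)^n := by ring
        _ ≤ (n.factorial : ℝ) * e^n := gpd_pow_le_factorial_exp n
        _ = e^n * n.factorial := by ring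
    -- combine
    have s3 : θ * (θ + ρ*n)^(n-1) * r^n / n.factorial ≤ (θ + ρ*n)^n * r^n * (e^n / (n:ℝ)^n) := by
      rw [div_eq_mul_one_div]
      calc θ * (θ + ρ*n)^(n-1) * r^n * ((1:ℝ)/n.factorial)
          ≤ (θ + ρ*n)^n * r^n * ((1:ℝ)/n.factorial) := by
            apply mul_le_mul_of_nonneg_right _ (by positivity)
            apply mul_le_mul_of_nonneg_right s1 (by positivity)
        _ ≤ (θ + ρ*n)^n * r^n * (e^n / (n:ℝ)^n) := by
            apply mul_le_mul_of_nonneg_left s2 (by positivity)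
    have s4 : (θ + ρ*n)^n * r^n * (e^n / (n:ℝ)^n) = ((θ/n + ρ) * (r*e))^n := by
      rw [div_eq_mul_inv, ← inv_pow, ← mul_pow, ← mul_pow, ← mul_pow]
      congr 1
      field_simp
    have s5 : (θ/n + ρ) * (r*e) ≤ q := by
      have hd : 0 < 1 - ρ*r*e := by linarith
      have hθn : θ/n * (r*e) ≤ (1 - ρ*r*e)/2 := by
        have hnN : (2*θ*r*e/(1 - ρ*r*e)) ≤ n := le_trans hn₀ (by exact_mod_cast by omega)
        rw [div_mul_eq_mul_div, div_le_iff₀ hnpos]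
        rw [div_le_iff₀ hd] at hnN
        calc θ*(r*e) = θ*r*e := by ring
          _ ≤ (n:ℝ) * (1 - ρ*r*e) / 2 := by nlinarith
          _ = (1 - ρ*r*e)/2 * n := by ring
      rw [hqdef]
      have hexp : (θ/n + ρ) * (r*e) = θ/n*(r*e) + ρ*r*e := by ring
      rw [hexp]
      linarith
    have s6 : ((θ/n + ρ) * (r*e))^n ≤ q^n :=
      pow_le_pow_left₀ (by positivity) s5 n
    linarith [s3, s4 ▸ s6]
  have hsub : Summable (fun n : ℕ => θ * (θ + ρ*(n + N₀ : ℕ))^((n + N₀ : ℕ)-1) * r^(n + N₀ : ℕ) / ((n + N₀ : ℕ).factorial : ℝ)) := by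
    apply Summable.of_nonneg_of_le (fun n => by positivity) (fun n => key (n + N₀) (by omega))
    exact (summable_geometric_of_lt_one hq0 hq1).comp_injective (fun a b => by omega)
  exact (summable_nat_add_iff N₀).mp hsub


/-- real exp as a sum -/
lemma gpd_exp_hasSum (x : ℝ) : HasSum (fun n : ℕ => x^n / n.factorial) (Real.exp x) := by
  rw [Real.exp_eq_exp_ℝ]
  exact NormedSpace.expSeries_div_hasSum_exp x

noncomputable def gpdT (θ lam : ℝ) (n : ℕ) : ℝ :=
  if n = 0 then 1 else θ * (θ + n*lam)^(n-1) * Real.exp (-(n*lam)) / n.factorial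

lemma gpd_small (θ lam : ℝ) (hθ : 0 < θ) (hl : 0 < lam) (hl8 : lam ≤ 1/8) :
    HasSum (gpdT θ lam) (Real.exp θ) := by
  classical
  set a : ℕ × ℕ → ℝ := fun p =>
    if p.1 = 0 then (if p.2 = 0 then 1 else 0)
    else θ * (θ + p.1*lam)^(p.1-1) * (-(p.1*lam))^p.2 / (p.1.factorial * p.2.factorial) with hadef
  -- smallness of lam * e^(lam) * e
  have hee : Real.exp 1 < 2.7182818286 := Real.exp_one_lt_d9
  have hepos := Real.exp_pos 1
  have hsmall : lam * Real.exp lam * Real.exp 1 < 1 := by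
    have h1 : Real.exp lam ≤ Real.exp 1 := Real.exp_le_exp.mpr (by linarith)
    have hl' : 0 < Real.exp lam := Real.exp_pos lam
    have h2a : lam * (Real.exp lam * Real.exp 1) ≤ (1/8) * (Real.exp lam * Real.exp 1) :=
      mul_le_mul_of_nonneg_right (by linarith) (by positivity)
    have h2b : (1/8) * (Real.exp lam * Real.exp 1) ≤ (1/8) * (Real.exp 1 * Real.exp 1) := by
      nlinarith
    nlinarith
  -- row sums with absolute values
  have habs_row : ∀ n : ℕ, HasSum (fun j => |a (n, j)|)
      (if n = 0 then 1 else θ * (θ + n*lam)^(n-1) * Real.exp (n*lam) / n.factorial) := by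
    intro n
    rcases Nat.eq_zero_or_pos n with h0 | hpos
    · subst h0
      simp only [hadef, if_pos rfl]
      have : (fun j : ℕ => |if j = 0 then (1:ℝ) else 0|) = fun j : ℕ => if j = 0 then (1:ℝ) else 0 := by
        funext j
        rcases eq_or_ne j 0 with h | h <;> simp [h]
      rw [this]
      exact hasSum_ite_eq 0 1
    · have hn0 : n ≠ 0 := Nat.pos_iff_ne_zero.mp hpos
      rw [if_neg hn0]
      have hc : ∀ j : ℕ, |a (n, j)| = (θ * (θ + n*lam)^(n-1) / n.factorial) * ((n*lam)^j / j.factorial) := by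
        intro j
        rw [hadef]
        simp only [if_neg hn0]
        rw [abs_div, abs_mul, abs_mul]
        have h1 : |θ| = θ := abs_of_pos hθ
        have h2 : |(θ + (n:ℝ)*lam)^(n-1)| = (θ + n*lam)^(n-1) := by
          apply abs_of_pos; positivity
        have h3 : |(-((n:ℝ)*lam))^j| = ((n:ℝ)*lam)^j := by
          rw [abs_pow, abs_neg, abs_of_nonneg (by positivity)]
        have h4 : |((n.factorial : ℝ) * (j.factorial : ℝ))| = (n.factorial : ℝ) * (j.factorial : ℝ) := by
          apply abs_of_pos; positivity
        rw [h1, h2, h3, h4]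
        field_simp
      have hrow := (gpd_exp_hasSum ((n:ℝ)*lam)).mul_left (θ * (θ + n*lam)^(n-1) / n.factorial)
      have : (θ * (θ + n*lam)^(n-1) / n.factorial) * Real.exp ((n:ℝ)*lam)
          = θ * (θ + n*lam)^(n-1) * Real.exp (n*lam) / n.factorial := by ring
      rw [this] at hrow
      have heq : (fun j : ℕ => |a (n, j)|) = fun j => (θ * (θ + n*lam)^(n-1) / n.factorial) * ((n*lam)^j / j.factorial) :=
        funext hc
      rw [heq]
      exact hrow
  -- summability of row absolute sums
  have hrowsum_summable : Summable (fun n : ℕ =>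
      if n = 0 then (1:ℝ) else θ * (θ + n*lam)^(n-1) * Real.exp (n*lam) / n.factorial) := by
    rw [← summable_nat_add_iff 1]
    have haux := gpd_summable_aux θ lam (Real.exp lam) hθ (le_of_lt hl) (Real.exp_pos lam) hsmall
    have haux1 := (summable_nat_add_iff 1).mpr haux
    apply Summable.congr haux1
    intro n
    rw [if_neg (Nat.succ_ne_zero n)]
    congr 2
    · congr 2
      push_cast
      ring
    · rw [← Real.exp_nat_mul]
  have hA : Summable (fun p : ℕ × ℕ => |a p|) := by
    apply (summable_prod_of_nonneg (fun p => abs_nonneg _)).mpr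
    constructor
    · intro n; exact (habs_row n).summable
    · apply Summable.congr hrowsum_summable
      intro n
      exact ((habs_row n).tsum_eq).symm
  have hAa : Summable a := summable_abs_iff.mp hA
  -- fiberwise sums
  have hrows : ∀ n : ℕ, HasSum (fun j => a (n, j)) (gpdT θ lam n) := by
    intro n
    rcases Nat.eq_zero_or_pos n with h0 | hpos
    · subst h0
      simp only [hadef, gpdT, if_pos rfl]
      exact hasSum_ite_eq 0 1
    · have hn0 : n ≠ 0 := Nat.pos_iff_ne_zero.mp hpos
      have hrow := (gpd_exp_hasSum (-((n:ℝ)*lam))).mul_left (θ * (θ + n*lam)^(n-1) / n.factorial)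
      have heq : (fun j : ℕ => a (n, j))
          = fun j => (θ * (θ + n*lam)^(n-1) / n.factorial) * ((-((n:ℝ)*lam))^j / j.factorial) := by
        funext j
        rw [hadef]
        simp only [if_neg hn0]
        field_simp
      have hval : (θ * (θ + n*lam)^(n-1) / n.factorial) * Real.exp (-((n:ℝ)*lam)) = gpdT θ lam n := by
        rw [gpdT, if_neg hn0]
        ring
      rw [heq]
      rw [← hval]
      exact hrow
  have htotal : HasSum a (∑' p, a p) := hAa.hasSum
  have hT : HasSum (gpdT θ lam) (∑' p, a p) := htotal.prod_fiberwise hrows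
  -- regroup along antidiagonals
  have hsig : HasSum (a ∘ Finset.HasAntidiagonal.sigmaAntidiagonalEquivProd) (∑' p, a p) :=
    (Equiv.hasSum_iff Finset.HasAntidiagonal.sigmaAntidiagonalEquivProd).mpr htotal
  have inner : ∀ N : ℕ, ∑ p ∈ Finset.HasAntidiagonal.antidiagonal N, a p = θ^N / N.factorial := by
    intro N
    rcases N with _ | M
    · rw [Finset.Nat.antidiagonal_zero, Finset.sum_singleton]
      simp [hadef]
    · rw [Finset.Nat.sum_antidiagonal_eq_sum_range_succ_mk]
      have hterm : ∀ k ∈ range (M+1+1), a (k, M+1-k)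
          = (if k = 0 then 0 else ((M+1).choose k : ℝ) * θ * (θ + k*lam)^(k-1) * (-(k*lam))^(M+1-k)) / (M+1).factorial := by
        intro k hk
        have hkM : k ≤ M + 1 := Nat.lt_succ_iff.mp (Finset.mem_range.mp hk)
        rcases eq_or_ne k 0 with h0 | h0
        · subst h0
          rw [hadef]
          simp only [if_pos rfl, if_neg (Nat.succ_ne_zero M)]
          norm_num
        · rw [hadef]
          simp only [if_neg h0]
          rw [Nat.cast_choose ℝ hkM]
          have hf1 : ((M+1).factorial : ℝ) ≠ 0 := by positivity
          have hf2 : (k.factorial : ℝ) ≠ 0 := by positivity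
          have hf3 : (((M+1-k).factorial : ℕ) : ℝ) ≠ 0 := by positivity
          field_simp
      rw [Finset.sum_congr rfl hterm, ← Finset.sum_div, gpd_keyfin M θ lam]
  have hfib : ∀ N : ℕ, HasSum (fun c : (Finset.HasAntidiagonal.antidiagonal N : Finset (ℕ×ℕ)) =>
      (a ∘ Finset.HasAntidiagonal.sigmaAntidiagonalEquivProd) ⟨N, c⟩) (θ^N / N.factorial) := by
    intro N
    have h1 : HasSum (fun c : (Finset.HasAntidiagonal.antidiagonal N : Finset (ℕ×ℕ)) => a c)
        (∑ c : (Finset.HasAntidiagonal.antidiagonal N : Finset (ℕ×ℕ)), a c) := hasSum_fintype _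
    have h2 : ∑ c : (Finset.HasAntidiagonal.antidiagonal N : Finset (ℕ×ℕ)), a (c : ℕ×ℕ) = ∑ p ∈ Finset.HasAntidiagonal.antidiagonal N, a p :=
      Finset.sum_coe_sort _ _
    rw [h2, inner N] at h1
    exact h1
  have hG : HasSum (fun N : ℕ => θ^N / N.factorial) (∑' p, a p) := hsig.sigma hfib
  have : (∑' p, a p) = Real.exp θ := hG.unique (gpd_exp_hasSum θ)
  rw [this] at hT
  exact hT


noncomputable def gpdF (θ : ℝ) (n : ℕ) (z : ℂ) : ℂ :=
  if n = 0 then 1 else θ * (θ + n*z)^(n-1) * Complex.exp (-(n*z)) / n.factorial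

def gpdU : Set ℂ := {z : ℂ | z.re < 1 ∧ ‖z‖ * Real.exp (1 - z.re) < 1}

lemma gpdU_open : IsOpen gpdU := by
  have h : gpdU = {z : ℂ | z.re < 1} ∩ {z : ℂ | ‖z‖ * Real.exp (1 - z.re) < 1} := rfl
  rw [h]
  exact (isOpen_lt Complex.continuous_re continuous_const).inter
    (isOpen_lt (continuous_norm.mul
      (Real.continuous_exp.comp (continuous_const.sub Complex.continuous_re))) continuous_const)

lemma gpdU_zero : (0:ℂ) ∈ gpdU := by
  constructor <;> simp [Real.exp_pos]

lemma gpdU_real (lam : ℝ) (h0 : 0 < lam) (h1 : lam < 1) : (lam : ℂ) ∈ gpdU := by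
  constructor
  · simpa using h1
  · simp only [Complex.norm_real, Real.norm_eq_abs, Complex.ofReal_re, abs_of_pos h0]
    have h2 : lam - 1 ≠ 0 := by intro h; apply absurd (by linarith : lam = 1) (ne_of_lt h1)
    have h3 : lam - 1 + 1 < Real.exp (lam - 1) := Real.add_one_lt_exp h2
    have h4 : Real.exp (lam-1) * Real.exp (1-lam) = 1 := by
      rw [← Real.exp_add]; norm_num
    nlinarith [Real.exp_pos (1-lam), Real.exp_pos (lam-1)]

lemma gpdU_preconnected : IsPreconnected gpdU := by
  have hstar : ∀ z ∈ gpdU, segment ℝ (0:ℂ) z ⊆ gpdU := by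
    rintro z ⟨hre, habs⟩ w hw
    rw [segment_eq_image] at hw
    obtain ⟨t, ⟨ht0, ht1⟩, rfl⟩ := hw
    simp only [smul_eq_mul, zero_add, mul_comm]
    have hwre : ((1 - t) • (0:ℂ) + t • z).re = t * z.re := by
      simp [Complex.add_re, Complex.smul_re]
    have hwabs : ‖(1 - t) • (0:ℂ) + t • z‖ = t * ‖z‖ := by
      simp only [smul_zero, zero_add]
      rw [show t • z = (t:ℂ) * z by simp [Complex.real_smul]]
      rw [norm_mul, Complex.norm_real, Real.norm_eq_abs, abs_of_nonneg ht0]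
    constructor
    · show ((1 - t) • (0:ℂ) + t • z).re < 1
      rw [hwre]
      rcases le_or_gt z.re 0 with h | h
      · nlinarith
      · nlinarith
    · show ‖_‖ * Real.exp (1 - ((1 - t) • (0:ℂ) + t • z).re) < 1
      rw [hwabs, hwre]
      rcases eq_or_lt_of_le ht0 with h | ht0'
      · simp [← h, Real.exp_pos]
      -- t * |z| * exp(1 - t z.re) = (t * exp((1-t) z.re)) * (|z| exp(1 - z.re))
      have hexpsplit : Real.exp (1 - t * z.re) = Real.exp ((1-t) * z.re) * Real.exp (1 - z.re) := by
        rw [← Real.exp_add]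
        congr 1
        ring
      have hsplit : t * ‖z‖ * Real.exp (1 - t * z.re)
          = (t * Real.exp ((1-t) * z.re)) * (‖z‖ * Real.exp (1 - z.re)) := by
        rw [hexpsplit]
        ring
      rw [hsplit]
      have h5 : t * Real.exp ((1-t) * z.re) ≤ 1 := by
        have h6 : (1-t) * z.re ≤ (1-t) := by nlinarith
        have h7 : Real.exp ((1-t)*z.re) ≤ Real.exp (1-t) := Real.exp_le_exp.mpr h6
        have h8 : t * Real.exp (1-t) ≤ 1 := by
          have h9 : (t - 1) + 1 ≤ Real.exp (t-1) := Real.add_one_le_exp (t-1)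
          have h10 : Real.exp (t-1) * Real.exp (1-t) = 1 := by
            rw [← Real.exp_add]; norm_num
          nlinarith [Real.exp_pos (1-t), Real.exp_pos (t-1)]
        nlinarith [Real.exp_pos ((1-t)*z.re), Real.exp_pos (1-t)]
      have habs0 : 0 ≤ ‖z‖ * Real.exp (1 - z.re) := by positivity
      nlinarith [Real.exp_pos ((1-t)*z.re)]
  have hU : gpdU = ⋃₀ {s | ∃ z ∈ gpdU, s = segment ℝ (0:ℂ) z} := by
    apply Set.Subset.antisymm
    · intro z hz
      exact ⟨segment ℝ 0 z, ⟨z, hz, rfl⟩, right_mem_segment ℝ 0 z⟩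
    · rintro w ⟨s, ⟨z, hz, rfl⟩, hw⟩
      exact hstar z hz hw
  rw [hU]
  apply isPreconnected_sUnion (0:ℂ)
  · rintro s ⟨z, hz, rfl⟩
    exact left_mem_segment ℝ 0 z
  · rintro s ⟨z, hz, rfl⟩
    exact (convex_segment (0:ℂ) z).isPreconnected

lemma gpdF_entire (θ : ℝ) (n : ℕ) : Differentiable ℂ (gpdF θ n) := by
  rcases eq_or_ne n 0 with h | h
  · subst h
    exact differentiable_const 1
  · unfold gpdF
    simp only [if_neg h]
    apply Differentiable.div_const
    apply Differentiable.mul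
    · apply Differentiable.mul (differentiable_const _)
      apply Differentiable.pow
      exact (differentiable_const _).add ((differentiable_const _).mul differentiable_id)
    · apply Differentiable.cexp
      exact ((differentiable_const _).mul differentiable_id).neg

lemma gpd_norm_le (θ : ℝ) (hθ : 0 < θ) (n : ℕ) (z : ℂ) (ρ c : ℝ)
    (hz : ‖z‖ ≤ ρ) (hre : -z.re ≤ c) :
    ‖gpdF θ n z‖ ≤ (θ+1) * ((θ+1) + ρ*n)^(n-1) * (Real.exp c)^n / n.factorial := by
  have hρ0 : 0 ≤ ρ := le_trans (norm_nonneg z) hz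
  rcases eq_or_ne n 0 with h | h
  · subst h
    simp only [gpdF, if_pos rfl]
    norm_num
    linarith
  · rw [gpdF, if_neg h]
    have hn1 : 1 ≤ n := Nat.one_le_iff_ne_zero.mpr h
    rw [norm_div, norm_mul, norm_mul]
    simp only [Complex.norm_real, Real.norm_eq_abs, Complex.norm_exp, Complex.norm_natCast]
    rw [abs_of_pos hθ, norm_pow]
    have hrene : (-((n:ℂ)*z)).re = (n:ℝ) * (-z.re) := by
      simp [Complex.mul_re]
    rw [hrene]
    have hA : ‖(θ:ℂ) + (n:ℂ)*z‖ ≤ (θ+1) + ρ*n := by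
      calc ‖(θ:ℂ) + (n:ℂ)*z‖ ≤ ‖(θ:ℂ)‖ + ‖(n:ℂ)*z‖ :=
            norm_add_le _ _
        _ = θ + (n:ℝ) * ‖z‖ := by
            rw [Complex.norm_real, Real.norm_eq_abs, abs_of_pos hθ, norm_mul, Complex.norm_natCast]
        _ ≤ (θ+1) + ρ*n := by nlinarith [norm_nonneg z]
    have hE : Real.exp ((n:ℝ) * (-z.re)) ≤ (Real.exp c)^n := by
      rw [Real.exp_nat_mul]
      apply pow_le_pow_left₀ (Real.exp_nonneg _)
      exact Real.exp_le_exp.mpr hre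
    gcongr
    all_goals first
      | exact hA
      | exact hE
      | linarith
      | positivity
      | exact norm_nonneg _

lemma gpd_S_diff (θ : ℝ) (hθ : 0 < θ) :
    DifferentiableOn ℂ (fun z => ∑' n, gpdF θ n z) gpdU := by
  intro z₀ hz₀
  obtain ⟨hre, habs⟩ := hz₀
  have hgc : ContinuousAt (fun r : ℝ => (‖z₀‖ + r) * Real.exp (1 - z₀.re + r)) 0 := by
    fun_prop
  have hg0 : (‖z₀‖ + 0) * Real.exp (1 - z₀.re + 0) < 1 := by
    simpa using habs
  have hev : (fun r : ℝ => (‖z₀‖ + r) * Real.exp (1 - z₀.re + r)) ⁻¹' (Set.Iio 1) ∈ 𝓝 (0:ℝ) :=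
    hgc (Iio_mem_nhds hg0)
  obtain ⟨ε, hε0, hball⟩ := Metric.mem_nhds_iff.mp hev
  set r := ε/2 with hrdef
  have hr0 : 0 < r := by positivity
  have hgr : (‖z₀‖ + r) * Real.exp (1 - z₀.re + r) < 1 := by
    have : r ∈ Metric.ball (0:ℝ) ε := by
      rw [Metric.mem_ball, dist_zero_right, Real.norm_eq_abs, abs_of_pos hr0]
      rw [hrdef]
      linarith
    exact hball this
  have hcond : (‖z₀‖ + r) * Real.exp (r - z₀.re) * Real.exp 1 < 1 := by
    have : Real.exp (r - z₀.re) * Real.exp 1 = Real.exp (1 - z₀.re + r) := by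
      rw [← Real.exp_add]; congr 1; ring
    rw [mul_assoc, this]
    exact hgr
  have key : DifferentiableOn ℂ (fun z => ∑' n, gpdF θ n z) (Metric.ball z₀ r) := by
    apply Complex.differentiableOn_tsum_of_summable_norm
      (u := fun n : ℕ => ((θ+1) * ((θ+1) + (‖z₀‖ + r)*n)^(n-1) * (Real.exp (r - z₀.re))^n / n.factorial))
    · exact gpd_summable_aux (θ+1) (‖z₀‖ + r) (Real.exp (r - z₀.re))
        (by linarith) (by positivity) (Real.exp_pos _) hcond
    · intro i; exact (gpdF_entire θ i).differentiableOn
    · exact Metric.isOpen_ball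
    · intro n w hw
      have hd : ‖w - z₀‖ < r := by
        rw [← Complex.dist_eq]
        exact Metric.mem_ball.mp hw
      apply gpd_norm_le θ hθ
      · calc ‖w‖ = ‖z₀ + (w - z₀)‖ := by ring_nf
          _ ≤ ‖z₀‖ + ‖w - z₀‖ := norm_add_le _ _
          _ ≤ ‖z₀‖ + r := by linarith
      · have h1 : |(w - z₀).re| ≤ ‖w - z₀‖ := Complex.abs_re_le_norm _
        have h2 : (w - z₀).re = w.re - z₀.re := Complex.sub_re w z₀
        rw [h2] at h1
        have h3 : |w.re - z₀.re| ≤ r := le_of_lt (lt_of_le_of_lt h1 hd)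
        have h4 := abs_le.mp h3
        linarith [h4.1]
  exact ((key z₀ (Metric.mem_ball_self hr0)).differentiableAt
    (Metric.isOpen_ball.mem_nhds (Metric.mem_ball_self hr0))).differentiableWithinAt

lemma gpd_ofReal (θ lam : ℝ) (n : ℕ) : gpdF θ n (lam : ℂ) = ((gpdT θ lam n : ℝ) : ℂ) := by
  rcases eq_or_ne n 0 with h | h
  · subst h
    simp [gpdF, gpdT]
  · rw [gpdF, gpdT, if_neg h, if_neg h]
    push_cast
    ring

lemma gpd_S_real_small (θ : ℝ) (hθ : 0 < θ) (lam : ℝ) (hl : 0 < lam) (h8 : lam ≤ 1/8) :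
    ∑' n, gpdF θ n (lam : ℂ) = ((Real.exp θ : ℝ) : ℂ) := by
  have hs := gpd_small θ lam hθ hl h8
  have h1 : ∑' n, gpdF θ n (lam : ℂ) = ((∑' n, gpdT θ lam n : ℝ) : ℂ) := by
    rw [Complex.ofReal_tsum]
    exact tsum_congr (fun n => gpd_ofReal θ lam n)
  rw [h1, hs.tsum_eq]

lemma gpd_S_eqOn (θ : ℝ) (hθ : 0 < θ) :
    Set.EqOn (fun z => ∑' n, gpdF θ n z) (fun _ => ((Real.exp θ : ℝ) : ℂ)) gpdU := by
  apply AnalyticOnNhd.eqOn_of_preconnected_of_frequently_eq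
    ((gpd_S_diff θ hθ).analyticOnNhd gpdU_open) analyticOnNhd_const
    gpdU_preconnected gpdU_zero
  have ht1 : Filter.Tendsto (fun k : ℕ => ((k:ℝ)+8)) Filter.atTop Filter.atTop :=
    Filter.tendsto_atTop_add_const_right _ 8 tendsto_natCast_atTop_atTop
  have ht2 : Filter.Tendsto (fun k : ℕ => ((k:ℝ)+8)⁻¹) Filter.atTop (𝓝 0) :=
    ht1.inv_tendsto_atTop
  have ht3 : Filter.Tendsto (fun k : ℕ => ((((k:ℝ)+8)⁻¹ : ℝ) : ℂ)) Filter.atTop (𝓝 0) := by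
    have := (Complex.continuous_ofReal.tendsto 0).comp ht2
    simpa [Function.comp_def] using this
  have ht4 : Filter.Tendsto (fun k : ℕ => ((((k:ℝ)+8)⁻¹ : ℝ) : ℂ)) Filter.atTop (𝓝[≠] (0:ℂ)) := by
    apply tendsto_nhdsWithin_of_tendsto_nhds_of_eventually_within _ ht3
    apply Filter.Eventually.of_forall
    intro k
    exact Complex.ofReal_ne_zero.mpr (by positivity)
  apply ht4.frequently
  apply Filter.Eventually.frequently
  apply Filter.Eventually.of_forall
  intro k
  have hpos : 0 < ((k:ℝ)+8)⁻¹ := by positivity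
  have hle : ((k:ℝ)+8)⁻¹ ≤ 1/8 := by
    have h8 : (8:ℝ) ≤ (k:ℝ)+8 := by
      have hk : (0:ℝ) ≤ (k:ℝ) := Nat.cast_nonneg k
      linarith
    have := inv_anti₀ (by norm_num : (0:ℝ) < 8) h8
    norm_num at this ⊢
    linarith
  exact gpd_S_real_small θ hθ _ hpos hle

lemma gpdT_tsum (θ lam : ℝ) (hθ : 0 < θ) (h0 : 0 < lam) (h1 : lam < 1) :
    ∑' n, gpdT θ lam n = Real.exp θ := by
  apply Complex.ofReal_injective
  rw [Complex.ofReal_tsum]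
  have h2 : ∑' n, ((gpdT θ lam n : ℝ) : ℂ) = ∑' n, gpdF θ n (lam : ℂ) :=
    tsum_congr (fun n => (gpd_ofReal θ lam n).symm)
  rw [h2]
  exact gpd_S_eqOn θ hθ (gpdU_real lam h0 h1)


theorem stmt6 (θ lam : ℝ) (hθ : 0 < θ) (hlam : lam ∈ Set.Ioo (0 : ℝ) 1) :
    ∑' n : ℕ, θ * (θ + lam * n) ^ ((n : ℤ) - 1) / n.factorial * Real.exp (-(θ + lam * n))
    = 1 := by
  obtain ⟨h0, h1⟩ := hlam
  have key := gpdT_tsum θ lam hθ h0 h1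
  have hterm : ∀ n : ℕ, θ * (θ + lam * n) ^ ((n : ℤ) - 1) / n.factorial * Real.exp (-(θ + lam * n))
      = Real.exp (-θ) * gpdT θ lam n := by
    intro n
    rcases eq_or_ne n 0 with h | h
    · subst h
      rw [gpdT, if_pos rfl]
      simp only [Nat.cast_zero, mul_zero, add_zero, Nat.factorial_zero, Nat.cast_one]
      rw [show ((0:ℤ) - 1) = (-1 : ℤ) by norm_num, zpow_neg_one]
      rw [mul_inv_cancel₀ (ne_of_gt hθ)]
      ring
    · rw [gpdT, if_neg h]
      rw [show ((n:ℤ) - 1) = ((n-1:ℕ):ℤ) from by omega, zpow_natCast]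
      rw [show (θ + lam*(n:ℝ)) = (θ + (n:ℝ)*lam) from by ring]
      rw [show -(θ + (n:ℝ)*lam) = (-θ) + (-((n:ℝ)*lam)) from by ring, Real.exp_add]
      ring
  rw [tsum_congr hterm, tsum_mul_left, key, ← Real.exp_add]
  norm_num
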